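/- Let ρ be a density matrix on a bipartite finite-dimensional system H_A ⊗ H_B (i.e. a positive semidefinite trace-one complex matrix indexed by pairs of indices), let O_x be a matrix acting on H_A and O_y a matrix acting on H_B. Then ‖O_y‖∞ · F(ρ_A, O_x ρ_A O_x†) ≥ F(ρ, M ρ M†), where M = O_x ⊗ O_y† and ρ_A = Tr_B ρ is the partial trace of ρ over H_B. (Global SW-SSB implies local SW-SSB.) -/

import Mathlib

noncomputable section

open scoped Matrix Kronecker ComplexOrder

/-- The positive semidefinite square root of a matrix (defaults to `0` if not PSD). -/
noncomputable def matSqrt {n : Type*} [Fintype n] [DecidableEq n] (M : Matrix n n ℂ) :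
    Matrix n n ℂ :=
  open scoped Classical in
  if h : M.PosSemidef then
    h.1.eigenvectorUnitary.1 * Matrix.diagonal ((fun x : ℝ => (x : ℂ)) ∘ Real.sqrt ∘ h.1.eigenvalues) *
      (star h.1.eigenvectorUnitary : Matrix n n ℂ)
  else 0

/-- The fidelity `F(ρ, σ) = tr √(√ρ σ √ρ)` of two PSD matrices. -/
noncomputable def fidelity {n : Type*} [Fintype n] [DecidableEq n] (ρ σ : Matrix n n ℂ) : ℝ :=
  (matSqrt (matSqrt ρ * σ * matSqrt ρ)).trace.re

/-- The ℓ²→ℓ² operator norm of a complex matrix. -/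
noncomputable def opNorm {m n : Type*} [Fintype m] [Fintype n] [DecidableEq n]
    (M : Matrix m n ℂ) : ℝ :=
  ‖(Matrix.toEuclideanLin.trans LinearMap.toContinuousLinearMap) M‖

/-- Partial trace over the second tensor factor. -/
noncomputable def ptraceB {A B : Type*} [Fintype B]
    (ρ : Matrix (A × B) (A × B) ℂ) : Matrix A A ℂ :=
  Matrix.of fun a a' => ∑ b : B, ρ (a, b) (a', b)

/-- the explicit PSD square root -/
noncomputable def Matrix.PosSemidef.sqrt {n : Type*} [Fintype n] [DecidableEq n]
    {M : Matrix n n ℂ} (h : M.PosSemidef) : Matrix n n ℂ :=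
  h.1.eigenvectorUnitary.1 * Matrix.diagonal ((fun x : ℝ => (x : ℂ)) ∘ Real.sqrt ∘ h.1.eigenvalues) *
    (star h.1.eigenvectorUnitary : Matrix n n ℂ)

lemma Matrix.PosSemidef.posSemidef_sqrt {n : Type*} [Fintype n] [DecidableEq n]
    {M : Matrix n n ℂ} (h : M.PosSemidef) : h.sqrt.PosSemidef := by
  unfold Matrix.PosSemidef.sqrt
  rw [Matrix.star_eq_conjTranspose]
  refine Matrix.PosSemidef.mul_mul_conjTranspose_same ?_ _
  rw [Matrix.posSemidef_diagonal_iff]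
  intro i
  simp only [Function.comp_apply, Complex.zero_le_real]
  exact Real.sqrt_nonneg _

lemma Matrix.PosSemidef.sqrt_mul_self {n : Type*} [Fintype n] [DecidableEq n]
    {M : Matrix n n ℂ} (h : M.PosSemidef) : h.sqrt * h.sqrt = M := by
  unfold Matrix.PosSemidef.sqrt
  conv_rhs => rw [h.1.spectral_theorem]
  rw [Unitary.conjStarAlgAut_apply]
  have hu : (star h.1.eigenvectorUnitary : Matrix n n ℂ) * h.1.eigenvectorUnitary.1 = 1 :=
    Unitary.coe_star_mul_self _
  set U : Matrix n n ℂ := h.1.eigenvectorUnitary.1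
  set Us : Matrix n n ℂ := (star h.1.eigenvectorUnitary : Matrix n n ℂ)
  calc _ = U * (Matrix.diagonal ((fun x : ℝ => (x : ℂ)) ∘ Real.sqrt ∘ h.1.eigenvalues) * (Us * U) *
        Matrix.diagonal ((fun x : ℝ => (x : ℂ)) ∘ Real.sqrt ∘ h.1.eigenvalues)) * Us := by
          simp only [Matrix.mul_assoc]
    _ = _ := by
      rw [hu, Matrix.mul_one, Matrix.diagonal_mul_diagonal]
      congr 3
      funext i
      simp only [Function.comp_apply]
      rw [← Complex.ofReal_mul, Real.mul_self_sqrt (h.eigenvalues_nonneg i)]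
      rfl

open scoped Matrix.Norms.L2Operator
set_option linter.unusedSectionVars false

namespace SWSSB

variable {n m p : Type*} [Fintype n] [DecidableEq n] [Fintype m] [DecidableEq m]
  [Fintype p] [DecidableEq p]

lemma opNorm_eq_norm (M : Matrix m n ℂ) : opNorm M = ‖M‖ := rfl

/-- squared ℓ² norm of a vector -/
noncomputable def nsq (v : n → ℂ) : ℝ := ∑ i, ‖v i‖ ^ 2

lemma nsq_nonneg (v : n → ℂ) : 0 ≤ nsq v :=
  Finset.sum_nonneg fun _ _ => sq_nonneg _

lemma norm_euclidean (v : n → ℂ) :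
    ‖(EuclideanSpace.equiv n ℂ).symm v‖ = Real.sqrt (nsq v) := by
  rw [EuclideanSpace.norm_eq]
  rfl

lemma nsq_mulVec_le (M : Matrix m n ℂ) (v : n → ℂ) :
    nsq (M *ᵥ v) ≤ ‖M‖ ^ 2 * nsq v := by
  have h := M.l2_opNorm_mulVec ((EuclideanSpace.equiv n ℂ).symm v)
  rw [norm_euclidean] at h
  have h2 : ‖((EuclideanSpace.equiv n ℂ).symm v : EuclideanSpace ℂ n)‖ = Real.sqrt (nsq v) :=
    norm_euclidean v
  rw [h2] at h
  have := mul_self_le_mul_self (Real.sqrt_nonneg (nsq (M *ᵥ v))) h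
  rw [Real.mul_self_sqrt (nsq_nonneg _)] at this
  calc nsq (M *ᵥ v) ≤ (‖M‖ * Real.sqrt (nsq v)) * (‖M‖ * Real.sqrt (nsq v)) := this
    _ = ‖M‖ ^ 2 * (Real.sqrt (nsq v) * Real.sqrt (nsq v)) := by ring
    _ = ‖M‖ ^ 2 * nsq v := by rw [Real.mul_self_sqrt (nsq_nonneg _)]

lemma opNorm_le_of_nsq {M : Matrix m n ℂ} {C : ℝ} (hC : 0 ≤ C)
    (h : ∀ v : n → ℂ, nsq (M *ᵥ v) ≤ C ^ 2 * nsq v) : ‖M‖ ≤ C := by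
  rw [Matrix.l2_opNorm_def]
  refine ContinuousLinearMap.opNorm_le_bound _ hC fun x => ?_
  have hx : (Matrix.toEuclideanLin.trans LinearMap.toContinuousLinearMap M) x
      = (EuclideanSpace.equiv m ℂ).symm (M *ᵥ ((EuclideanSpace.equiv n ℂ) x)) := rfl
  rw [hx, norm_euclidean]
  have hxn : ‖x‖ = Real.sqrt (nsq ((EuclideanSpace.equiv n ℂ) x)) := by
    rw [EuclideanSpace.norm_eq]; rfl
  rw [hxn]
  have := h ((EuclideanSpace.equiv n ℂ) x)
  calc Real.sqrt (nsq (M *ᵥ (EuclideanSpace.equiv n ℂ) x))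
      ≤ Real.sqrt (C ^ 2 * nsq ((EuclideanSpace.equiv n ℂ) x)) := Real.sqrt_le_sqrt this
    _ = C * Real.sqrt (nsq ((EuclideanSpace.equiv n ℂ) x)) := by
        rw [Real.sqrt_mul (sq_nonneg C), Real.sqrt_sq hC]

lemma abs_dotProduct_le (u z : n → ℂ) :
    ‖dotProduct (star u) z‖ ≤ Real.sqrt (nsq u) * Real.sqrt (nsq z) := by
  have := norm_inner_le_norm (𝕜 := ℂ)
    ((EuclideanSpace.equiv n ℂ).symm u) ((EuclideanSpace.equiv n ℂ).symm z)
  rw [norm_euclidean, norm_euclidean] at this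
  rw [EuclideanSpace.inner_eq_star_dotProduct, dotProduct_comm] at this
  exact this


lemma nsq_eq_re_dot (v : n → ℂ) : nsq v = (dotProduct (star v) v).re := by
  simp only [nsq, dotProduct, Pi.star_apply, Complex.re_sum]
  refine Finset.sum_congr rfl fun i _ => ?_
  rw [RCLike.star_def, RCLike.conj_mul]
  norm_cast

lemma nsq_mulVec_eq (M : Matrix m n ℂ) (v : n → ℂ) :
    nsq (M *ᵥ v) = (dotProduct (star v) ((Mᴴ * M) *ᵥ v)).re := by
  rw [nsq_eq_re_dot]
  congr 1
  rw [Matrix.star_mulVec, ← Matrix.mulVec_mulVec]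
  simp [Matrix.dotProduct_mulVec, Matrix.vecMul_vecMul]

lemma dot_sandwich (V D : Matrix n n ℂ) (v : n → ℂ) :
    dotProduct (star v) ((V * D * Vᴴ) *ᵥ v)
      = dotProduct (star (Vᴴ *ᵥ v)) (D *ᵥ (Vᴴ *ᵥ v)) := by
  rw [Matrix.star_mulVec, Matrix.conjTranspose_conjTranspose]
  rw [← Matrix.mulVec_mulVec, ← Matrix.mulVec_mulVec]
  simp [Matrix.dotProduct_mulVec, Matrix.vecMul_vecMul]

lemma re_dot_diagonal (f : n → ℝ) (w : n → ℂ) :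
    (dotProduct (star w) ((Matrix.diagonal (fun i => (f i : ℂ))) *ᵥ w)).re
      = ∑ i, f i * ‖w i‖ ^ 2 := by
  simp only [dotProduct, Matrix.mulVec_diagonal, Pi.star_apply, Complex.re_sum]
  refine Finset.sum_congr rfl fun i _ => ?_
  have h : star (w i) * ((f i : ℂ) * w i) = (f i : ℂ) * (star (w i) * w i) := by ring
  rw [h, RCLike.star_def, RCLike.conj_mul, ← RCLike.ofReal_pow]
  simp only [Complex.mul_re, Complex.ofReal_re, Complex.ofReal_im, zero_mul, sub_zero,
    mul_eq_mul_left_iff]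
  left
  exact Complex.ofReal_re _

lemma nsq_unitary_star (V : Matrix n n ℂ) (hV : V ∈ Matrix.unitaryGroup n ℂ) (v : n → ℂ) :
    nsq (Vᴴ *ᵥ v) = nsq v := by
  rw [nsq_mulVec_eq, Matrix.conjTranspose_conjTranspose, ← Matrix.star_eq_conjTranspose,
    Unitary.mul_star_self_of_mem hV]
  rw [Matrix.one_mulVec, ← nsq_eq_re_dot]

/-- If `Mᴴ M = V (diagonal f) Vᴴ` with `V` unitary and `0 ≤ f ≤ 1`, then `‖M‖ ≤ 1`. -/
lemma norm_le_one_of_conj_diag (M : Matrix m n ℂ) (V : Matrix n n ℂ)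
    (hV : V ∈ Matrix.unitaryGroup n ℂ) (f : n → ℝ) (hf : ∀ i, 0 ≤ f i ∧ f i ≤ 1)
    (hM : Mᴴ * M = V * Matrix.diagonal (fun i => (f i : ℂ)) * Vᴴ) : ‖M‖ ≤ 1 := by
  refine opNorm_le_of_nsq zero_le_one fun v => ?_
  rw [nsq_mulVec_eq, hM, dot_sandwich, re_dot_diagonal, one_pow, one_mul]
  calc ∑ i, f i * ‖(Vᴴ *ᵥ v) i‖ ^ 2
      ≤ ∑ i, ‖(Vᴴ *ᵥ v) i‖ ^ 2 := by
        refine Finset.sum_le_sum fun i _ => ?_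
        nlinarith [sq_nonneg ‖(Vᴴ *ᵥ v) i‖, (hf i).1, (hf i).2]
    _ = nsq (Vᴴ *ᵥ v) := rfl
    _ = nsq v := nsq_unitary_star V hV v


/-- trace norm of a square matrix -/
noncomputable def tnorm (X : Matrix n n ℂ) : ℝ := (matSqrt (Xᴴ * X)).trace.re

lemma matSqrt_of_posSemidef {M : Matrix n n ℂ} (h : M.PosSemidef) : matSqrt M = h.sqrt :=
  dif_pos h

lemma tnorm_eq_sum_sqrt (X : Matrix n n ℂ) :
    tnorm X = ∑ i, Real.sqrt ((Matrix.posSemidef_conjTranspose_mul_self X).1.eigenvalues i) := by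
  have h := Matrix.posSemidef_conjTranspose_mul_self X
  rw [tnorm, matSqrt_of_posSemidef h, Matrix.PosSemidef.sqrt, Matrix.trace_mul_cycle,
    Unitary.coe_star_mul_self, one_mul, Matrix.trace_diagonal]
  rw [Complex.re_sum]
  refine Finset.sum_congr rfl fun i _ => ?_
  simp

lemma tnorm_nonneg (X : Matrix n n ℂ) : 0 ≤ tnorm X := by
  rw [tnorm_eq_sum_sqrt]
  exact Finset.sum_nonneg fun i _ => Real.sqrt_nonneg _

lemma re_trace_mul_le (X W : Matrix n n ℂ) :
    ((X * W).trace).re ≤ ‖W‖ * tnorm X := by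
  have h := Matrix.posSemidef_conjTranspose_mul_self X
  have hH : (Xᴴ * X).IsHermitian := h.1
  set V : Matrix n n ℂ := (hH.eigenvectorUnitary : Matrix n n ℂ) with hVdef
  have hVmem : V ∈ Matrix.unitaryGroup n ℂ := hH.eigenvectorUnitary.2
  set u : n → n → ℂ := fun i => ⇑(hH.eigenvectorBasis i) with hudef
  have hu : ∀ i k, V k i = u i k := fun i k => hH.eigenvectorUnitary_apply k i
  -- norms of the basis vectors
  have hnsq : ∀ i, nsq (u i) = 1 := by
    intro i
    have h1 : Real.sqrt (nsq (u i)) = 1 := by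
      rw [← norm_euclidean]
      exact hH.eigenvectorBasis.orthonormal.1 i
    have := congrArg (· ^ 2) h1
    simpa [Real.sq_sqrt (nsq_nonneg (u i))] using this
  -- eigenvalue equation
  have heig : ∀ i, (Xᴴ * X) *ᵥ (u i) = (hH.eigenvalues i) • u i := fun i =>
    hH.mulVec_eigenvectorBasis i
  -- ‖X v_i‖² = eigenvalue
  have hXu : ∀ i, nsq (X *ᵥ u i) = hH.eigenvalues i := by
    intro i
    rw [nsq_mulVec_eq, heig]
    rw [dotProduct_smul]
    have : (dotProduct (star (u i)) (u i)).re = 1 := by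
      rw [← nsq_eq_re_dot]; exact hnsq i
    rw [Complex.real_smul, Complex.re_ofReal_mul, this, mul_one]
  -- trace rewrite
  have htr : (X * W).trace = (Vᴴ * (W * X) * V).trace := by
    rw [Matrix.trace_mul_comm, Matrix.trace_mul_cycle, ← Matrix.star_eq_conjTranspose,
      Matrix.mem_unitaryGroup_iff.mp hVmem, one_mul]
  have hdiag : ∀ (M : Matrix n n ℂ) i,
      (Vᴴ * M * V) i i = dotProduct (star (u i)) (M *ᵥ (u i)) := by
    intro M i
    simp only [Matrix.mul_apply, Matrix.conjTranspose_apply, dotProduct, Matrix.mulVec,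
      Pi.star_apply, Finset.sum_mul, Finset.mul_sum, hu]
    rw [Finset.sum_comm]
    exact Finset.sum_congr rfl fun k _ => Finset.sum_congr rfl fun l _ => by ring
  rw [htr, Matrix.trace, Complex.re_sum, tnorm_eq_sum_sqrt, Finset.mul_sum]
  refine Finset.sum_le_sum fun i _ => ?_
  rw [Matrix.diag_apply, hdiag]
  calc (dotProduct (star (u i)) ((W * X) *ᵥ u i)).re
      ≤ ‖dotProduct (star (u i)) ((W * X) *ᵥ u i)‖ := Complex.re_le_norm _
    _ ≤ Real.sqrt (nsq (u i)) * Real.sqrt (nsq ((W * X) *ᵥ u i)) := abs_dotProduct_le _ _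
    _ = Real.sqrt (nsq (W *ᵥ (X *ᵥ u i))) := by
        rw [hnsq, Real.sqrt_one, one_mul, Matrix.mulVec_mulVec]
    _ ≤ Real.sqrt (‖W‖ ^ 2 * nsq (X *ᵥ u i)) := Real.sqrt_le_sqrt (nsq_mulVec_le W _)
    _ = ‖W‖ * Real.sqrt (hH.eigenvalues i) := by
        rw [hXu, Real.sqrt_mul (sq_nonneg _), Real.sqrt_sq (norm_nonneg W)]


lemma exists_dual (X : Matrix n n ℂ) :
    ∃ W : Matrix n n ℂ, ‖W‖ ≤ 1 ∧ ((X * W).trace).re = tnorm X := by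
  classical
  have h := Matrix.posSemidef_conjTranspose_mul_self X
  have hH : (Xᴴ * X).IsHermitian := h.1
  set V : Matrix n n ℂ := (hH.eigenvectorUnitary : Matrix n n ℂ) with hVdef
  have hVmem : V ∈ Matrix.unitaryGroup n ℂ := hH.eigenvectorUnitary.2
  set d := hH.eigenvalues with hddef
  have hd0 : ∀ i, 0 ≤ d i := fun i => h.eigenvalues_nonneg i
  have hsqr : ∀ i, d i ≠ 0 → Real.sqrt (d i) ≠ 0 := fun i hi =>
    Real.sqrt_ne_zero'.mpr (lt_of_le_of_ne (hd0 i) (Ne.symm hi))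
  set Dinv : Matrix n n ℂ :=
    Matrix.diagonal (fun i => ((if d i = 0 then (0 : ℝ) else (Real.sqrt (d i))⁻¹ : ℝ) : ℂ))
    with hDinvdef
  set W := V * Dinv * Vᴴ * Xᴴ with hWdef
  have hdiag : Vᴴ * (Xᴴ * X) * V = Matrix.diagonal (fun i => ((d i : ℝ) : ℂ)) := by
    rw [← Matrix.star_eq_conjTranspose]
    have := hH.conjStarAlgAut_star_eigenvectorUnitary
    rw [Unitary.conjStarAlgAut_star_apply] at this
    exact this
  refine ⟨W, ?_, ?_⟩
  · -- ‖W‖ ≤ 1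
    have hDinvH : Dinvᴴ = Dinv := by
      rw [hDinvdef, Matrix.diagonal_conjTranspose]
      refine congrArg Matrix.diagonal (funext fun i => ?_)
      exact Complex.conj_ofReal _
    have hWH : Wᴴ = X * V * Dinv * Vᴴ := by
      rw [hWdef]
      simp only [Matrix.conjTranspose_mul, Matrix.conjTranspose_conjTranspose]
      rw [hDinvH]
      simp only [Matrix.mul_assoc]
    have hWWH : W * Wᴴ = V * Matrix.diagonal
        (fun i => (((if d i = 0 then (0:ℝ) else 1) : ℝ) : ℂ)) * Vᴴ := by
      rw [hWH, hWdef]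
      have e1 : V * Dinv * Vᴴ * Xᴴ * (X * V * Dinv * Vᴴ)
          = V * (Dinv * (Vᴴ * (Xᴴ * X) * V) * Dinv) * Vᴴ := by
        simp only [Matrix.mul_assoc]
      rw [e1, hdiag]
      congr 2
      rw [hDinvdef, Matrix.diagonal_mul_diagonal, Matrix.diagonal_mul_diagonal]
      refine congrArg Matrix.diagonal (funext fun i => ?_)
      by_cases hi : d i = 0
      · simp [hi]
      · simp only [hi, if_false, Function.comp_apply]
        have hr : (Real.sqrt (d i))⁻¹ * (d i) * (Real.sqrt (d i))⁻¹ = (1:ℝ) := by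
          rw [show d i = Real.sqrt (d i) * Real.sqrt (d i) from
            (Real.mul_self_sqrt (hd0 i)).symm]
          field_simp [hsqr i hi]
          rw [Real.sqrt_sq (Real.sqrt_nonneg _)]
        push_cast
        have hz : ((Real.sqrt (d i) : ℝ) : ℂ) ≠ 0 := by exact_mod_cast hsqr i hi
        field_simp
        norm_cast
        nlinarith [Real.mul_self_sqrt (hd0 i)]
    have h1 : ‖Wᴴ‖ ≤ 1 := by
      refine norm_le_one_of_conj_diag Wᴴ V hVmem (fun i => if d i = 0 then 0 else 1)
        (fun i => by by_cases hi : d i = 0 <;> simp [hi]) ?_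
      rw [Matrix.conjTranspose_conjTranspose, hWWH]
    rw [← Matrix.l2_opNorm_conjTranspose W]
    exact h1
  · -- trace value
    have t1 : X * W = (X * (V * Dinv)) * (Vᴴ * Xᴴ) := by
      rw [hWdef]; simp only [Matrix.mul_assoc]
    rw [t1, Matrix.trace_mul_comm]
    have t2 : (Vᴴ * Xᴴ) * (X * (V * Dinv)) = (Vᴴ * (Xᴴ * X) * V) * Dinv := by
      simp only [Matrix.mul_assoc]
    rw [t2, hdiag, hDinvdef, Matrix.diagonal_mul_diagonal, Matrix.trace_diagonal,
      Complex.re_sum, tnorm_eq_sum_sqrt]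
    have : ∑ i, Real.sqrt ((Matrix.posSemidef_conjTranspose_mul_self X).1.eigenvalues i)
        = ∑ i, Real.sqrt (d i) := rfl
    rw [this]
    refine Finset.sum_congr rfl fun i _ => ?_
    by_cases hi : d i = 0
    · simp [hi]
    · simp only [Function.comp_apply, hi, if_false]
      have hr : (d i) * (Real.sqrt (d i))⁻¹ = Real.sqrt (d i) := by
        rw [show d i = Real.sqrt (d i) * Real.sqrt (d i) from
          (Real.mul_self_sqrt (hd0 i)).symm]
        field_simp [hsqr i hi]
        rw [Real.sqrt_sq (Real.sqrt_nonneg _)]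
      rw [(show ((d i : ℝ) : ℂ) * (((√(d i))⁻¹ : ℝ) : ℂ)
          = ((d i * (√(d i))⁻¹ : ℝ) : ℂ) by push_cast; ring), hr, Complex.ofReal_re]


lemma tnorm_conj_le (Y : Matrix n n ℂ) (C : Matrix n m ℂ) (hC : ‖C‖ ≤ 1) :
    tnorm (Cᴴ * Y * C) ≤ tnorm Y := by
  obtain ⟨W, hW, hTr⟩ := exists_dual (Cᴴ * Y * C)
  rw [← hTr]
  have e : (Cᴴ * Y * C) * W = Cᴴ * ((Y * (C * W))) := by simp only [Matrix.mul_assoc]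
  rw [e, Matrix.trace_mul_comm]
  have e2 : (Y * (C * W)) * Cᴴ = Y * (C * W * Cᴴ) := by simp only [Matrix.mul_assoc]
  rw [e2]
  have hb : ‖C * W * Cᴴ‖ ≤ 1 := by
    calc ‖C * W * Cᴴ‖ ≤ ‖C * W‖ * ‖Cᴴ‖ := Matrix.l2_opNorm_mul _ _
      _ ≤ (‖C‖ * ‖W‖) * ‖C‖ := by
          rw [Matrix.l2_opNorm_conjTranspose]
          exact mul_le_mul_of_nonneg_right (Matrix.l2_opNorm_mul _ _) (norm_nonneg _)
      _ ≤ 1 := by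
          have h1 : ‖C‖ * ‖W‖ ≤ 1 := by nlinarith [norm_nonneg C, norm_nonneg W]
          nlinarith [norm_nonneg C, norm_nonneg W, mul_nonneg (norm_nonneg C) (norm_nonneg W)]
  calc (Y * (C * W * Cᴴ)).trace.re ≤ ‖C * W * Cᴴ‖ * tnorm Y := re_trace_mul_le Y _
    _ ≤ 1 * tnorm Y := mul_le_mul_of_nonneg_right hb (tnorm_nonneg Y)
    _ = tnorm Y := one_mul _

lemma nsq_star (v : n → ℂ) : nsq (star v) = nsq v := by
  simp [nsq]

lemma norm_map_conj_le (M : Matrix m n ℂ) : ‖M.map (starRingEnd ℂ)‖ ≤ ‖M‖ := by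
  refine opNorm_le_of_nsq (norm_nonneg M) fun v => ?_
  have e : (M.map (starRingEnd ℂ)) *ᵥ v = star (M *ᵥ (star v)) := by
    funext i
    simp only [Matrix.mulVec, dotProduct, Matrix.map_apply, Pi.star_apply, star_sum,
      star_mul', RCLike.star_def, RCLike.conj_conj]
  rw [e, nsq_star]
  calc nsq (M *ᵥ star v) ≤ ‖M‖ ^ 2 * nsq (star v) := nsq_mulVec_le M _
    _ = ‖M‖ ^ 2 * nsq v := by rw [nsq_star]

lemma norm_transpose_le (M : Matrix m n ℂ) : ‖Mᵀ‖ ≤ ‖M‖ := by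
  have e : Mᵀ = (Mᴴ).map (starRingEnd ℂ) := by
    ext i j
    simp [Matrix.conjTranspose_apply, Matrix.map_apply]
  rw [e]
  calc ‖(Mᴴ).map (starRingEnd ℂ)‖ ≤ ‖Mᴴ‖ := norm_map_conj_le _
    _ = ‖M‖ := Matrix.l2_opNorm_conjTranspose M

lemma norm_kron_one_le (A : Matrix m m ℂ) : ‖(A ⊗ₖ (1 : Matrix n n ℂ))‖ ≤ ‖A‖ := by
  refine opNorm_le_of_nsq (norm_nonneg A) fun v => ?_
  have key : ∀ a b, ((A ⊗ₖ (1 : Matrix n n ℂ)) *ᵥ v) (a, b)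
      = (A *ᵥ fun a' => v (a', b)) a := by
    intro a b
    simp only [Matrix.mulVec, dotProduct, Matrix.kroneckerMap_apply, Matrix.one_apply,
      Fintype.sum_prod_type, mul_ite, mul_one, mul_zero, ite_mul, zero_mul]
    simp [Finset.sum_ite_eq]
  calc nsq ((A ⊗ₖ (1 : Matrix n n ℂ)) *ᵥ v)
      = ∑ b, nsq (A *ᵥ fun a' => v (a', b)) := by
        rw [nsq, Fintype.sum_prod_type, Finset.sum_comm]
        exact Finset.sum_congr rfl fun b _ => Finset.sum_congr rfl fun a _ => by rw [key]
    _ ≤ ∑ b, ‖A‖ ^ 2 * nsq (fun a' => v (a', b)) :=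
        Finset.sum_le_sum fun b _ => nsq_mulVec_le A _
    _ = ‖A‖ ^ 2 * nsq v := by
        rw [← Finset.mul_sum]
        congr 1
        rw [nsq, Fintype.sum_prod_type, Finset.sum_comm]
        rfl

lemma norm_one_kron_le (B : Matrix n n ℂ) : ‖((1 : Matrix m m ℂ) ⊗ₖ B)‖ ≤ ‖B‖ := by
  refine opNorm_le_of_nsq (norm_nonneg B) fun v => ?_
  have key : ∀ a b, (((1 : Matrix m m ℂ) ⊗ₖ B) *ᵥ v) (a, b)
      = (B *ᵥ fun b' => v (a, b')) b := by
    intro a b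
    simp only [Matrix.mulVec, dotProduct, Matrix.kroneckerMap_apply, Matrix.one_apply,
      Fintype.sum_prod_type, mul_ite, mul_one, mul_zero, ite_mul, zero_mul]
    simp [Finset.sum_ite_eq]
  calc nsq (((1 : Matrix m m ℂ) ⊗ₖ B) *ᵥ v)
      = ∑ a, nsq (B *ᵥ fun b' => v (a, b')) := by
        rw [nsq, Fintype.sum_prod_type]
        exact Finset.sum_congr rfl fun a _ => Finset.sum_congr rfl fun b _ => by rw [key]
    _ ≤ ∑ a, ‖B‖ ^ 2 * nsq (fun b' => v (a, b')) :=
        Finset.sum_le_sum fun a _ => nsq_mulVec_le B _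
    _ = ‖B‖ ^ 2 * nsq v := by
        rw [← Finset.mul_sum]
        congr 1
        rw [nsq, Fintype.sum_prod_type]
        rfl

lemma norm_kron_le (A : Matrix m m ℂ) (B : Matrix n n ℂ) : ‖A ⊗ₖ B‖ ≤ ‖A‖ * ‖B‖ := by
  have e : A ⊗ₖ B = (A ⊗ₖ (1 : Matrix n n ℂ)) * ((1 : Matrix m m ℂ) ⊗ₖ B) := by
    rw [← Matrix.mul_kronecker_mul, Matrix.mul_one, Matrix.one_mul]
  rw [e]
  calc ‖(A ⊗ₖ (1 : Matrix n n ℂ)) * ((1 : Matrix m m ℂ) ⊗ₖ B)‖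
      ≤ ‖A ⊗ₖ (1 : Matrix n n ℂ)‖ * ‖(1 : Matrix m m ℂ) ⊗ₖ B‖ := Matrix.l2_opNorm_mul _ _
    _ ≤ ‖A‖ * ‖B‖ := by
        have h1 := norm_kron_one_le (n := n) A
        have h2 := norm_one_kron_le (m := m) B
        have := norm_nonneg (A ⊗ₖ (1 : Matrix n n ℂ))
        have := norm_nonneg ((1 : Matrix m m ℂ) ⊗ₖ B)
        nlinarith [norm_nonneg A, norm_nonneg B]


section PartialTrace

variable {A B : Type*} [Fintype A] [DecidableEq A] [Fintype B] [DecidableEq B]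

lemma ptraceB_posSemidef {ρ : Matrix (A × B) (A × B) ℂ} (hρ : ρ.PosSemidef) :
    (ptraceB ρ).PosSemidef := by
  obtain ⟨Bm, hB⟩ : ∃ Bm : Matrix (A × B) (A × B) ℂ, ρ = Bmᴴ * Bm :=
    ⟨hρ.sqrt, by rw [hρ.posSemidef_sqrt.1.eq, hρ.sqrt_mul_self]⟩
  set G : Matrix ((A × B) × B) A ℂ := Matrix.of fun kb a => Bm kb.1 (a, kb.2) with hG
  have hptr : ptraceB ρ = Gᴴ * G := by
    ext a a'
    simp only [ptraceB, Matrix.of_apply, Matrix.mul_apply, Matrix.conjTranspose_apply, hB,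
      Fintype.sum_prod_type, hG]
    rw [Finset.sum_comm]
    exact Finset.sum_congr rfl fun k _ => Finset.sum_comm
  rw [hptr]
  exact Matrix.posSemidef_conjTranspose_mul_self G

/-- the reshaped matrix `P` with `P a (b,k) = S (a,b) k` -/
noncomputable def Pmat (S : Matrix (A × B) (A × B) ℂ) : Matrix A (B × (A × B)) ℂ :=
  Matrix.of fun a bk => S (a, bk.1) bk.2

lemma Pmat_mul_conjTranspose (S : Matrix (A × B) (A × B) ℂ) :
    (Pmat S) * (Pmat S)ᴴ = ptraceB (S * Sᴴ) := by
  ext a a'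
  simp only [Pmat, ptraceB, Matrix.of_apply, Matrix.mul_apply, Matrix.conjTranspose_apply,
    Fintype.sum_prod_type]

end PartialTrace

lemma trace_mul_sum {α : Type*} [Fintype α] (M N : Matrix α α ℂ) :
    (M * N).trace = ∑ i, ∑ j, M i j * N j i := by
  simp [Matrix.trace, Matrix.mul_apply, Matrix.diag]

section Reshuffle

variable {A B : Type*} [Fintype A] [DecidableEq A] [Fintype B] [DecidableEq B]

lemma trace_reshuffle (S : Matrix (A × B) (A × B) ℂ) (hS : Sᴴ = S)
    (F : Matrix A A ℂ) (G : Matrix B B ℂ) (U : Matrix (A × B) (A × B) ℂ) :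
    ((S * (F ⊗ₖ G) * S) * U).trace = (((Pmat S)ᴴ * F * (Pmat S)) * (Gᵀ ⊗ₖ U)).trace := by
  have hconj : ∀ (p k : A × B), star (S p k) = S k p := by
    intro p k
    have h := congrFun (congrFun hS k) p
    simpa [Matrix.conjTranspose_apply] using h
  have cyc : ((S * (F ⊗ₖ G) * S) * U).trace = ((F ⊗ₖ G) * (S * U * S)).trace := by
    rw [show (S * (F ⊗ₖ G) * S) * U = (S * (F ⊗ₖ G)) * (S * U) by simp only [Matrix.mul_assoc],
      Matrix.trace_mul_comm,
      show (S * U) * (S * (F ⊗ₖ G)) = (S * U * S) * (F ⊗ₖ G) by simp only [Matrix.mul_assoc],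
      Matrix.trace_mul_comm]
  rw [cyc, trace_mul_sum, trace_mul_sum]
  simp only [Matrix.mul_apply, Matrix.kroneckerMap_apply, Matrix.conjTranspose_apply,
    Matrix.transpose_apply, Pmat, Matrix.of_apply, Fintype.sum_prod_type, Finset.sum_mul,
    Finset.mul_sum, hconj]
  have hL : ∑ z : A × B × A × B × A × B × A × B,
      F z.1 z.2.2.1 * G z.2.1 z.2.2.2.1 *
        (S (z.2.2.1, z.2.2.2.1) (z.2.2.2.2.2.2.1, z.2.2.2.2.2.2.2) *
          U (z.2.2.2.2.2.2.1, z.2.2.2.2.2.2.2) (z.2.2.2.2.1, z.2.2.2.2.2.1) *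
          S (z.2.2.2.2.1, z.2.2.2.2.2.1) (z.1, z.2.1))
      = ∑ x : A, ∑ x1 : B, ∑ x2 : A, ∑ x3 : B, ∑ x4 : A, ∑ x5 : B, ∑ x6 : A, ∑ x7 : B,
        F x x2 * G x1 x3 * (S (x2, x3) (x6, x7) * U (x6, x7) (x4, x5) * S (x4, x5) (x, x1)) := by
    simp only [Fintype.sum_prod_type]
  have hR : ∑ w : B × A × B × B × A × B × A × A,
      S (w.2.1, w.2.2.1) (w.2.2.2.2.2.2.2, w.1) * F w.2.2.2.2.2.2.2 w.2.2.2.2.2.2.1 *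
        S (w.2.2.2.2.2.2.1, w.2.2.2.1) (w.2.2.2.2.1, w.2.2.2.2.2.1) *
        (G w.1 w.2.2.2.1 * U (w.2.2.2.2.1, w.2.2.2.2.2.1) (w.2.1, w.2.2.1))
      = ∑ x : B, ∑ x1 : A, ∑ y : B, ∑ x2 : B, ∑ x3 : A, ∑ x4 : B, ∑ x5 : A, ∑ x6 : A,
        S (x1, y) (x6, x) * F x6 x5 * S (x5, x2) (x3, x4) * (G x x2 * U (x3, x4) (x1, y)) := by
    simp only [Fintype.sum_prod_type]
  refine (hL.symm.trans ?_).trans hR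
  refine Fintype.sum_equiv ⟨fun z => (z.2.1, z.2.2.2.2.1, z.2.2.2.2.2.1, z.2.2.2.1,
      z.2.2.2.2.2.2.1, z.2.2.2.2.2.2.2, z.2.2.1, z.1),
    fun w => (w.2.2.2.2.2.2.2, w.1, w.2.2.2.2.2.2.1, w.2.2.2.1, w.2.1, w.2.2.1,
      w.2.2.2.2.1, w.2.2.2.2.2.1), fun z => rfl, fun w => rfl⟩ _ _ ?_
  intro z
  dsimp only [Equiv.coe_fn_mk]
  ring

end Reshuffle

lemma exists_contraction_factor (R : Matrix n n ℂ) (hR : R.PosSemidef)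
    (P : Matrix n m ℂ) (hPP : P * Pᴴ = R) :
    ∃ Vc : Matrix n m ℂ, P = matSqrt R * Vc ∧ ‖Vc‖ ≤ 1 := by
  classical
  have hH : R.IsHermitian := hR.1
  set V : Matrix n n ℂ := (hH.eigenvectorUnitary : Matrix n n ℂ) with hVdef
  have hVmem : V ∈ Matrix.unitaryGroup n ℂ := hH.eigenvectorUnitary.2
  have hVVs : V * Vᴴ = 1 := by
    rw [← Matrix.star_eq_conjTranspose]; exact Matrix.mem_unitaryGroup_iff.mp hVmem
  have hsVV : Vᴴ * V = 1 := by
    rw [← Matrix.star_eq_conjTranspose]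
    exact mul_eq_one_comm.mp (Matrix.mem_unitaryGroup_iff.mp hVmem)
  set d := hH.eigenvalues with hddef
  have hd0 : ∀ i, 0 ≤ d i := fun i => hR.eigenvalues_nonneg i
  have hsqr : ∀ i, d i ≠ 0 → Real.sqrt (d i) ≠ 0 := fun i hi =>
    Real.sqrt_ne_zero'.mpr (lt_of_le_of_ne (hd0 i) (Ne.symm hi))
  have hmul : ∀ f g : n → ℂ, (V * Matrix.diagonal f * Vᴴ) * (V * Matrix.diagonal g * Vᴴ)
      = V * Matrix.diagonal (fun i => f i * g i) * Vᴴ := by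
    intro f g
    have e : (V * Matrix.diagonal f * Vᴴ) * (V * Matrix.diagonal g * Vᴴ)
        = V * (Matrix.diagonal f * (Vᴴ * V) * Matrix.diagonal g) * Vᴴ := by
      simp only [Matrix.mul_assoc]
    rw [e, hsVV, Matrix.mul_one, Matrix.diagonal_mul_diagonal]
  have hT : matSqrt R = V * Matrix.diagonal (fun i => ((Real.sqrt (d i) : ℝ) : ℂ)) * Vᴴ := by
    rw [matSqrt_of_posSemidef hR, Matrix.PosSemidef.sqrt]
    rfl
  set Tinv : Matrix n n ℂ :=
    V * Matrix.diagonal (fun i => ((if d i = 0 then (0:ℝ) else (Real.sqrt (d i))⁻¹ : ℝ) : ℂ)) * Vᴴ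
    with hTinvdef
  set Pj : Matrix n n ℂ :=
    V * Matrix.diagonal (fun i => (((if d i = 0 then (0:ℝ) else 1) : ℝ) : ℂ)) * Vᴴ with hPjdef
  have hTinvT : Tinv * matSqrt R = Pj := by
    rw [hT, hTinvdef, hPjdef, hmul]
    congr 2
    refine congrArg Matrix.diagonal (funext fun i => ?_)
    by_cases hi : d i = 0
    · simp [hi]
    · simp only [hi, if_false]
      rw [← Complex.ofReal_mul, inv_mul_cancel₀ (hsqr i hi)]
  have hTTinv : matSqrt R * Tinv = Pj := by
    rw [hT, hTinvdef, hPjdef, hmul]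
    congr 2
    refine congrArg Matrix.diagonal (funext fun i => ?_)
    by_cases hi : d i = 0
    · simp [hi]
    · simp only [hi, if_false]
      rw [← Complex.ofReal_mul, mul_inv_cancel₀ (hsqr i hi)]
  have hPjT : Pj * matSqrt R = matSqrt R := by
    rw [hT, hPjdef, hmul]
    congr 2
    refine congrArg Matrix.diagonal (funext fun i => ?_)
    by_cases hi : d i = 0
    · simp [hi]
    · simp [hi]
  have hPjH : Pjᴴ = Pj := by
    rw [hPjdef]
    simp only [Matrix.conjTranspose_mul, Matrix.conjTranspose_conjTranspose,
      Matrix.diagonal_conjTranspose]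
    rw [show star (fun i => (((if d i = 0 then (0:ℝ) else 1) : ℝ) : ℂ))
        = (fun i => (((if d i = 0 then (0:ℝ) else 1) : ℝ) : ℂ)) from
      funext fun i => Complex.conj_ofReal _]
    simp only [Matrix.mul_assoc]
  have hTH : (matSqrt R)ᴴ = matSqrt R := by
    rw [matSqrt_of_posSemidef hR]
    exact hR.posSemidef_sqrt.1
  have hTT : matSqrt R * matSqrt R = R := by
    rw [matSqrt_of_posSemidef hR]
    exact hR.sqrt_mul_self
  have h1 : Pj * R = R := by rw [← hTT, ← Matrix.mul_assoc, hPjT]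
  have h2 : R * Pj = R := by
    have h3 := congrArg Matrix.conjTranspose h1
    rwa [Matrix.conjTranspose_mul, hPjH, hR.1.eq] at h3
  have hNN : (P - Pj * P) * (P - Pj * P)ᴴ = 0 := by
    rw [Matrix.conjTranspose_sub, Matrix.conjTranspose_mul, hPjH]
    rw [Matrix.sub_mul, Matrix.mul_sub, Matrix.mul_sub]
    have a2 : P * (Pᴴ * Pj) = R := by rw [← Matrix.mul_assoc, hPP, h2]
    have a3 : Pj * P * Pᴴ = R := by rw [Matrix.mul_assoc, hPP, h1]
    have a4 : Pj * P * (Pᴴ * Pj) = R := by rw [Matrix.mul_assoc, a2, h1]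
    rw [hPP, a2, a3, a4]
    simp
  have hsub := Matrix.self_mul_conjTranspose_eq_zero.mp hNN
  have hP : Pj * P = P := by
    have := sub_eq_zero.mp hsub
    exact this.symm
  refine ⟨Tinv * P, ?_, ?_⟩
  · rw [← Matrix.mul_assoc, hTTinv, hP]
  · have hTinvH : Tinvᴴ = Tinv := by
      rw [hTinvdef]
      simp only [Matrix.conjTranspose_mul, Matrix.conjTranspose_conjTranspose,
        Matrix.diagonal_conjTranspose]
      rw [show star (fun i => ((if d i = 0 then (0:ℝ) else (Real.sqrt (d i))⁻¹ : ℝ) : ℂ))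
          = (fun i => ((if d i = 0 then (0:ℝ) else (Real.sqrt (d i))⁻¹ : ℝ) : ℂ)) from
        funext fun i => Complex.conj_ofReal _]
      simp only [Matrix.mul_assoc]
    have hVV : (Tinv * P) * (Tinv * P)ᴴ = Pj := by
      have e : (Tinv * P) * (Tinv * P)ᴴ = Tinv * (P * Pᴴ) * Tinvᴴ := by
        simp only [Matrix.conjTranspose_mul, Matrix.mul_assoc]
      rw [e, hPP, hTinvH, ← hTT]
      have e2 : Tinv * (matSqrt R * matSqrt R) * Tinv
          = (Tinv * matSqrt R) * (matSqrt R * Tinv) := by simp only [Matrix.mul_assoc]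
      rw [e2, hTinvT, hTTinv, hPjdef, hmul]
      congr 2
      refine congrArg Matrix.diagonal (funext fun i => ?_)
      by_cases hi : d i = 0 <;> simp [hi]
    have hnormH : ‖(Tinv * P)ᴴ‖ ≤ 1 := by
      refine norm_le_one_of_conj_diag ((Tinv * P)ᴴ) V hVmem
        (fun i => if d i = 0 then 0 else 1)
        (fun i => by by_cases hi : d i = 0 <;> simp [hi]) ?_
      rw [Matrix.conjTranspose_conjTranspose, hVV, hPjdef]
    rw [← Matrix.l2_opNorm_conjTranspose (Tinv * P)]
    exact hnormH


lemma fidelity_eq (ρ : Matrix n n ℂ) (hρ : ρ.PosSemidef) (M : Matrix n n ℂ) :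
    fidelity ρ (M * ρ * Mᴴ) = tnorm (matSqrt ρ * Mᴴ * matSqrt ρ) := by
  have hSps : (matSqrt ρ).PosSemidef := by
    rw [matSqrt_of_posSemidef hρ]; exact hρ.posSemidef_sqrt
  have hSH : (matSqrt ρ)ᴴ = matSqrt ρ := hSps.1
  have hSS : matSqrt ρ * matSqrt ρ = ρ := by
    rw [matSqrt_of_posSemidef hρ]; exact hρ.sqrt_mul_self
  have key : ∀ S' : Matrix n n ℂ, S'ᴴ = S' → S' * S' = ρ →
      S' * (M * ρ * Mᴴ) * S' = (S' * Mᴴ * S')ᴴ * (S' * Mᴴ * S') := by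
    intro S' h1 h2
    rw [← h2, Matrix.conjTranspose_mul, Matrix.conjTranspose_mul, h1,
      Matrix.conjTranspose_conjTranspose]
    noncomm_ring
  rw [fidelity, tnorm, key _ hSH hSS]

end SWSSB

open SWSSB in
/-- **Global SW-SSB implies local SW-SSB** (Theorem 1):
`‖O_y‖∞ · F(ρ_A, O_x ρ_A O_x†) ≥ F(ρ, (O_x ⊗ O_y†) ρ (O_x ⊗ O_y†)†)`. -/
theorem global_SWSSB_implies_local_SWSSB
    {A B : Type*} [Fintype A] [DecidableEq A] [Fintype B] [DecidableEq B]
    (ρ : Matrix (A × B) (A × B) ℂ) (hρ : ρ.PosSemidef) (hρtr : ρ.trace = 1)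
    (Ox : Matrix A A ℂ) (Oy : Matrix B B ℂ) :
    fidelity ρ ((Ox ⊗ₖ Oyᴴ) * ρ * (Ox ⊗ₖ Oyᴴ)ᴴ) ≤
      opNorm Oy * fidelity (ptraceB ρ) (Ox * ptraceB ρ * Oxᴴ) := by
  classical
  have hSps : (matSqrt ρ).PosSemidef := by
    rw [matSqrt_of_posSemidef hρ]; exact hρ.posSemidef_sqrt
  have hSH : (matSqrt ρ)ᴴ = matSqrt ρ := hSps.1
  have hSS : matSqrt ρ * matSqrt ρ = ρ := by
    rw [matSqrt_of_posSemidef hρ]; exact hρ.sqrt_mul_self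
  have hρAps : (ptraceB ρ).PosSemidef := ptraceB_posSemidef hρ
  -- rewrite LHS
  have hM : (Ox ⊗ₖ Oyᴴ)ᴴ = Oxᴴ ⊗ₖ Oy := by
    ext ⟨a, b⟩ ⟨a', b'⟩
    simp [Matrix.conjTranspose_apply, Matrix.kroneckerMap_apply, star_mul']
  have hLHS : fidelity ρ ((Ox ⊗ₖ Oyᴴ) * ρ * (Ox ⊗ₖ Oyᴴ)ᴴ)
      = tnorm (matSqrt ρ * (Oxᴴ ⊗ₖ Oy) * matSqrt ρ) := by
    rw [fidelity_eq ρ hρ (Ox ⊗ₖ Oyᴴ), hM]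
  have hRHS : fidelity (ptraceB ρ) (Ox * ptraceB ρ * Oxᴴ)
      = tnorm (matSqrt (ptraceB ρ) * Oxᴴ * matSqrt (ptraceB ρ)) :=
    fidelity_eq (ptraceB ρ) hρAps Ox
  rw [hLHS, hRHS, opNorm_eq_norm]
  -- the reshaped matrix
  have hPPH : (Pmat (matSqrt ρ)) * (Pmat (matSqrt ρ))ᴴ = ptraceB ρ := by
    rw [Pmat_mul_conjTranspose, hSH, hSS]
  obtain ⟨W₀, hW₀, htr⟩ := exists_dual (matSqrt ρ * (Oxᴴ ⊗ₖ Oy) * matSqrt ρ)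
  obtain ⟨Vc, hVc, hVcn⟩ := exists_contraction_factor (ptraceB ρ) hρAps _ hPPH
  have key := trace_reshuffle (matSqrt ρ) hSH Oxᴴ Oy W₀
  have step1 : tnorm (matSqrt ρ * (Oxᴴ ⊗ₖ Oy) * matSqrt ρ)
      ≤ ‖Oyᵀ ⊗ₖ W₀‖ * tnorm ((Pmat (matSqrt ρ))ᴴ * Oxᴴ * (Pmat (matSqrt ρ))) := by
    rw [← htr, key]
    exact re_trace_mul_le _ _
  have hWnorm : ‖Oyᵀ ⊗ₖ W₀‖ ≤ ‖Oy‖ := by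
    calc ‖Oyᵀ ⊗ₖ W₀‖ ≤ ‖Oyᵀ‖ * ‖W₀‖ := norm_kron_le _ _
      _ ≤ ‖Oy‖ * 1 := mul_le_mul (norm_transpose_le Oy) hW₀ (norm_nonneg _) (norm_nonneg _)
      _ = ‖Oy‖ := mul_one _
  have step2 : tnorm ((Pmat (matSqrt ρ))ᴴ * Oxᴴ * (Pmat (matSqrt ρ)))
      ≤ tnorm (matSqrt (ptraceB ρ) * Oxᴴ * matSqrt (ptraceB ρ)) := by
    have hTH : (matSqrt (ptraceB ρ))ᴴ = matSqrt (ptraceB ρ) := by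
      rw [matSqrt_of_posSemidef hρAps]; exact hρAps.posSemidef_sqrt.1
    have e : (Pmat (matSqrt ρ))ᴴ * Oxᴴ * (Pmat (matSqrt ρ))
        = Vcᴴ * (matSqrt (ptraceB ρ) * Oxᴴ * matSqrt (ptraceB ρ)) * Vc := by
      rw [hVc, Matrix.conjTranspose_mul, hTH]
      simp only [Matrix.mul_assoc]
    rw [e]
    exact tnorm_conj_le _ Vc hVcn
  calc tnorm (matSqrt ρ * (Oxᴴ ⊗ₖ Oy) * matSqrt ρ)
      ≤ ‖Oyᵀ ⊗ₖ W₀‖ * tnorm ((Pmat (matSqrt ρ))ᴴ * Oxᴴ * (Pmat (matSqrt ρ))) := step1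
    _ ≤ ‖Oy‖ * tnorm ((Pmat (matSqrt ρ))ᴴ * Oxᴴ * (Pmat (matSqrt ρ))) :=
        mul_le_mul_of_nonneg_right hWnorm (tnorm_nonneg _)
    _ ≤ ‖Oy‖ * tnorm (matSqrt (ptraceB ρ) * Oxᴴ * matSqrt (ptraceB ρ)) :=
        mul_le_mul_of_nonneg_left step2 (norm_nonneg Oy)
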